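/- There exist constants C > 0 and x₀ such that for all real x ≥ x₀: ∑ 1/u ≤ C / (log x)², where the sum is over all positive integers u with x^{1/200} ≤ u ≤ x^{1/100} and τ(u) ≥ (log x)⁴. -/

import Mathlib

private lemma harm_le (n : ℕ) : ∑ d ∈ Finset.Icc 1 n, (1:ℝ)/d ≤ 1 + Real.log n := by
  have h := harmonic_le_one_add_log n
  rw [harmonic_eq_sum_Icc] at h
  push_cast at h
  simpa only [one_div] using h

private lemma tau_sum_le (N : ℕ) :
    ∑ u ∈ Finset.Icc 1 N, (u.divisors.card : ℝ)/u ≤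
      (∑ d ∈ Finset.Icc 1 N, (1:ℝ)/d)^2 := by
  have h1 : ∑ u ∈ Finset.Icc 1 N, (u.divisors.card : ℝ)/u
      = ∑ u ∈ Finset.Icc 1 N, ∑ _d ∈ u.divisors, (1:ℝ)/u := by
    refine Finset.sum_congr rfl fun u _ => ?_
    rw [Finset.sum_const, nsmul_eq_mul, mul_one_div]
  rw [h1, Finset.sum_sigma']
  have h2 : ∑ p ∈ (Finset.Icc 1 N).sigma (fun u => u.divisors), (1:ℝ)/p.1
      = ∑ p ∈ ((Finset.Icc 1 N) ×ˢ (Finset.Icc 1 N)).filter (fun p => p.1 * p.2 ≤ N),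
          (1:ℝ)/((p.1 : ℝ) * (p.2 : ℝ)) := by
    refine Finset.sum_nbij' (fun a => (a.2, a.1 / a.2)) (fun p => ⟨p.1 * p.2, p.1⟩)
      ?_ ?_ ?_ ?_ ?_
    · rintro ⟨u, d⟩ ha
      simp only [Finset.mem_sigma, Finset.mem_Icc, Nat.mem_divisors] at ha
      obtain ⟨⟨hu1, huN⟩, hdvd, hu0⟩ := ha
      have hd0 : 0 < d := Nat.pos_of_dvd_of_pos hdvd (by omega)
      have hdle : d ≤ u := Nat.le_of_dvd (by omega) hdvd
      have hq : d * (u / d) = u := Nat.mul_div_cancel' hdvd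
      simp only [Finset.mem_filter, Finset.mem_product, Finset.mem_Icc]
      refine ⟨⟨⟨hd0, by omega⟩, ?_, ?_⟩, by omega⟩
      · have : 0 < u / d := Nat.div_pos hdle hd0
        omega
      · have : u / d ≤ u := Nat.div_le_self u d
        omega
    · rintro ⟨d, m⟩ hp
      simp only [Finset.mem_filter, Finset.mem_product, Finset.mem_Icc] at hp
      obtain ⟨⟨⟨hd1, hdN⟩, hm1, hmN⟩, hle⟩ := hp
      simp only [Finset.mem_sigma, Finset.mem_Icc, Nat.mem_divisors]
      exact ⟨⟨Nat.one_le_iff_ne_zero.mpr (by positivity), hle⟩, dvd_mul_right d m,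
        by positivity⟩
    · rintro ⟨u, d⟩ ha
      simp only [Finset.mem_sigma, Finset.mem_Icc, Nat.mem_divisors] at ha
      have : d * (u / d) = u := Nat.mul_div_cancel' ha.2.1
      simp [this]
    · rintro ⟨d, m⟩ hp
      simp [Nat.mul_div_cancel_left m (show 0 < d by
        simp only [Finset.mem_filter, Finset.mem_product, Finset.mem_Icc] at hp; omega)]
    · rintro ⟨u, d⟩ ha
      simp only [Finset.mem_sigma, Finset.mem_Icc, Nat.mem_divisors] at ha
      have h : d * (u / d) = u := Nat.mul_div_cancel' ha.2.1
      conv_lhs => rw [← h]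
      push_cast
      ring
  have h3 : (∑ d ∈ Finset.Icc 1 N, (1:ℝ)/d)^2
      = ∑ p ∈ (Finset.Icc 1 N) ×ˢ (Finset.Icc 1 N), (1:ℝ)/((p.1 : ℝ) * (p.2 : ℝ)) := by
    rw [sq, Finset.sum_mul_sum, ← Finset.sum_product']
    exact Finset.sum_congr rfl fun p _ => one_div_mul_one_div _ _
  rw [h2, h3]
  refine Finset.sum_le_sum_of_subset_of_nonneg (Finset.filter_subset _ _) ?_
  intro p _ _
  positivity

/-- `∑ 1/u ≪ 1/(log x)²`, where the sum is over `u ∈ [x^{1/200}, x^{1/100}]` with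
`τ(u) ≥ (log x)⁴`. -/
theorem sum_inv_large_tau :
    ∃ C : ℝ, 0 < C ∧ ∃ x₀ : ℝ, ∀ x : ℝ, x₀ ≤ x →
      ∑ u ∈ ((Finset.Icc 1 ⌊x ^ ((1 : ℝ) / 100)⌋₊).filter
          (fun u : ℕ => x ^ ((1 : ℝ) / 200) ≤ (u : ℝ) ∧
            (Real.log x) ^ 4 ≤ (u.divisors.card : ℝ))),
        (1 : ℝ) / (u : ℝ) ≤
      C / (Real.log x) ^ 2 := by
  refine ⟨1, one_pos, Real.exp 200, fun x hx => ?_⟩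
  have hx0 : (1:ℝ) < x := lt_of_lt_of_le (by
    have := Real.exp_lt_exp.mpr (show (0:ℝ) < 200 by norm_num); simpa using this) hx
  have hxpos : (0:ℝ) < x := by linarith
  set L := Real.log x with hL
  have hL2 : (200:ℝ) ≤ L := by
    rw [hL, ← Real.log_exp 200]
    exact Real.log_le_log (Real.exp_pos _) hx
  have hLpos : (0:ℝ) < L := by linarith
  set N := ⌊x ^ ((1 : ℝ) / 100)⌋₊ with hN
  have hrpos : (0:ℝ) < x ^ ((1:ℝ)/100) := Real.rpow_pos_of_pos hxpos _
  -- log N ≤ L / 100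
  have hlogN : Real.log N ≤ L / 100 := by
    rcases Nat.eq_zero_or_pos N with h0 | hNpos
    · rw [h0]; simp; positivity
    · have h1 : (N:ℝ) ≤ x ^ ((1:ℝ)/100) := Nat.floor_le (le_of_lt hrpos)
      calc Real.log N ≤ Real.log (x ^ ((1:ℝ)/100)) :=
            Real.log_le_log (by exact_mod_cast hNpos) h1
        _ = (1/100) * L := by rw [Real.log_rpow hxpos]
        _ = L / 100 := by ring
  have key : ∑ u ∈ Finset.Icc 1 N, (u.divisors.card : ℝ)/u ≤ L^2 := by
    calc ∑ u ∈ Finset.Icc 1 N, (u.divisors.card : ℝ)/u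
        ≤ (∑ d ∈ Finset.Icc 1 N, (1:ℝ)/d)^2 := tau_sum_le N
      _ ≤ (1 + Real.log N)^2 := by
          have hnn : (0:ℝ) ≤ ∑ d ∈ Finset.Icc 1 N, (1:ℝ)/d :=
            Finset.sum_nonneg fun d _ => by positivity
          exact pow_le_pow_left₀ hnn (harm_le N) 2
      _ ≤ L^2 := by
          have hlogNnn : (0:ℝ) ≤ Real.log N := by
            rcases Nat.eq_zero_or_pos N with h0 | hNpos
            · simp [h0]
            · exact Real.log_natCast_nonneg N
          have h1 : 1 + Real.log N ≤ L := by nlinarith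
          exact pow_le_pow_left₀ (by linarith) h1 2
  set S := ((Finset.Icc 1 N).filter
      (fun u : ℕ => x ^ ((1 : ℝ) / 200) ≤ (u : ℝ) ∧ L ^ 4 ≤ (u.divisors.card : ℝ))) with hS
  have step1 : ∑ u ∈ S, (1:ℝ)/u ≤ ∑ u ∈ S, ((u.divisors.card : ℝ)/u) / L^4 := by
    refine Finset.sum_le_sum fun u hu => ?_
    simp only [hS, Finset.mem_filter, Finset.mem_Icc] at hu
    obtain ⟨⟨hu1, -⟩, -, htau⟩ := hu
    have hupos : (0:ℝ) < u := by exact_mod_cast hu1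
    rw [div_div, div_le_div_iff₀ hupos (by positivity)]
    calc (1:ℝ) * (u * L^4) = u * L^4 := by ring
      _ ≤ u * (u.divisors.card : ℝ) := by
          exact mul_le_mul_of_nonneg_left htau (le_of_lt hupos)
      _ = (u.divisors.card : ℝ) * u := by ring
  have step2 : ∑ u ∈ S, ((u.divisors.card : ℝ)/u) / L^4
      ≤ (∑ u ∈ Finset.Icc 1 N, (u.divisors.card : ℝ)/u) / L^4 := by
    rw [← Finset.sum_div]
    exact div_le_div_of_nonneg_right (hc := by positivity) (hab :=
      (Finset.sum_le_sum_of_subset_of_nonneg (Finset.filter_subset _ _)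
        (fun u _ _ => by positivity)))
  calc ∑ u ∈ S, (1:ℝ)/u ≤ _ := step1
    _ ≤ _ := step2
    _ ≤ L^2 / L^4 := by gcongr
    _ ≤ 1 / L^2 := by
        rw [div_le_div_iff₀ (by positivity) (by positivity)]
        nlinarith
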